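/- arXiv:1904.08699 — 12 statements merged into one kernel-verified Lean document; each statement's English description precedes it below -/
import Mathlib

section
/- Let n ≥ 1 and m be natural numbers and let p : Fin n → Fin m → ℝ with 0 ≤ p i j ≤ 1 be the outcome-0 statistics of n preparations under m binary measurements. Suppose the restriction of p to the first n−1 preparations admits a preparation-noncontextual ontological model (with the noncontextuality condition quantified over weight vectors on those n−1 preparations). Define extended statistics p' : Fin n → Fin (m+1) → ℝ by p' i j = p i j for j < m, p' i m = 1 for i < n−1, and p' (n−1) m = 0. Then p' admits a preparation-noncontextual ontological model for all n preparations and all m+1 measurements. -/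
/-- The data `(μ, ξ)` on a finite ontic space `Λ` is a preparation-noncontextual
ontological model of the statistics `p`. -/
def IsPNCModelOn {n m : ℕ} (p : Fin n → Fin m → ℝ) (Λ : Type) [Fintype Λ]
    (μ : Fin n → Λ → ℝ) (ξ : Fin m → Λ → ℝ) : Prop :=
  (∀ i l, 0 ≤ μ i l) ∧
  (∀ i, ∑ l, μ i l = 1) ∧
  (∀ j l, 0 ≤ ξ j l ∧ ξ j l ≤ 1) ∧
  (∀ i j, ∑ l, μ i l * ξ j l = p i j) ∧
  (∀ w w' : Fin n → ℝ, (∀ i, 0 ≤ w i) → (∀ i, 0 ≤ w' i) →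
    ∑ i, w i = 1 → ∑ i, w' i = 1 →
    (∀ j, ∑ i, w i * p i j = ∑ i, w' i * p i j) →
    ∀ l, ∑ i, w i * μ i l = ∑ i, w' i * μ i l)

/-- The statistics `p` admit a preparation-noncontextual ontological model on some
finite ontic state space. -/
def IsPNCModel {n m : ℕ} (p : Fin n → Fin m → ℝ) : Prop :=
  ∃ (Λ : Type) (inst : Fintype Λ) (μ : Fin n → Λ → ℝ) (ξ : Fin m → Λ → ℝ),
    @IsPNCModelOn n m p Λ inst μ ξ

/-- If the first `n-1` preparations admit a preparation-noncontextual model for the `m`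
known measurements, then adding an extra measurement that deterministically singles out the
last preparation still admits a preparation-noncontextual model for all `n` preparations. -/
theorem extra_measurement_allows_noncontextual_model
    (n m : ℕ) (hn : 1 ≤ n) (p : Fin n → Fin m → ℝ)
    (hp : ∀ i j, 0 ≤ p i j ∧ p i j ≤ 1)
    (hmodel : IsPNCModel (fun (i : Fin (n - 1)) (j : Fin m) =>
      p (Fin.castLE (Nat.sub_le n 1) i) j)) :
    IsPNCModel (fun (i : Fin n) (j : Fin (m + 1)) =>
      if h : (j : ℕ) < m then p i ⟨j, h⟩
      else if (i : ℕ) < n - 1 then 1 else 0) := by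
  obtain ⟨k, rfl⟩ : ∃ k, n = k + 1 := ⟨n - 1, (Nat.succ_pred_eq_of_pos hn).symm⟩
  obtain ⟨Λ, inst, μ, ξ, hμ0, hμ1, hξ, hstat, hNC⟩ := hmodel
  classical
  have hlast : ∀ i : Fin (k+1), ¬ (i:ℕ) < k → i = Fin.last k := by
    intro i h
    exact Fin.ext (by have := i.isLt; simp only [Fin.val_last]; omega)
  have hstat' : ∀ (i : Fin (k+1)) (hi : (i:ℕ) < k) (j : Fin m),
      ∑ l, μ ⟨i, hi⟩ l * ξ j l = p i j := by
    intro i hi j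
    have := hstat ⟨i, hi⟩ j
    simp only at this
    rwa [show (Fin.castLE (Nat.sub_le (k+1) 1) (⟨(i:ℕ), hi⟩ : Fin (k+1-1)) : Fin (k+1))
      = i from Fin.ext rfl] at this
  refine ⟨Option Λ, inferInstance,
    fun i l => Option.casesOn l (if (i:ℕ) < k then 0 else 1)
      (fun a => if h : (i:ℕ) < k then μ ⟨i, h⟩ a else 0),
    fun j l => Option.casesOn l (if h : (j:ℕ) < m then p (Fin.last k) ⟨j, h⟩ else 0)
      (fun a => if h : (j:ℕ) < m then ξ ⟨j, h⟩ a else 1),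
    ?_, ?_, ?_, ?_, ?_⟩
  · rintro i (_|a)
    · dsimp; split <;> norm_num
    · dsimp; split
      · exact hμ0 _ _
      · exact le_refl 0
  · intro i
    rw [Fintype.sum_option]
    by_cases h : (i:ℕ) < k
    · simp only [h, if_true, dif_pos h, zero_add]
      exact hμ1 ⟨i, h⟩
    · simp only [h, if_false, dif_neg h]
      simp
  · rintro j (_|a)
    · dsimp; split
      · exact ⟨(hp _ _).1, (hp _ _).2⟩
      · norm_num
    · dsimp; split
      · exact hξ _ _
      · norm_num
  · intro i j
    rw [Fintype.sum_option]
    by_cases hj : (j:ℕ) < m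
    · by_cases hi : (i:ℕ) < k
      · simp only [Nat.add_sub_cancel, dif_pos hj, if_pos hi, dif_pos hi, zero_mul, zero_add]
        exact hstat' i hi ⟨j, hj⟩
      · have hi' : i = Fin.last k := hlast i hi
        rw [hi'] at hi ⊢
        simp only [Nat.add_sub_cancel, dif_pos hj, if_neg hi, dif_neg hi, one_mul,
          zero_mul, Finset.sum_const_zero, add_zero]
    · by_cases hi : (i:ℕ) < k
      · simp only [Nat.add_sub_cancel, dif_neg hj, if_pos hi, dif_pos hi, zero_mul,
          zero_add, mul_one]
        exact hμ1 ⟨i, hi⟩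
      · simp only [Nat.add_sub_cancel, dif_neg hj, if_neg hi, dif_neg hi, mul_zero,
          zero_mul, one_mul, Finset.sum_const_zero, add_zero]
  · intro w w' hw0 hw'0 hw1 hw'1 hpe l
    simp only [Nat.add_sub_cancel] at hpe
    -- from the last measurement: partial sums agree
    have hm : ∀ (v : Fin (k+1) → ℝ),
        (∑ i, v i * (if h : ((Fin.last m : Fin (m+1)):ℕ) < m then p i ⟨_, h⟩
          else if (i:ℕ) < k then (1:ℝ) else 0))
        = ∑ i : Fin k, v i.castSucc := by
      intro v
      rw [Fin.sum_univ_castSucc]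
      simp [Fin.is_lt]
    have hsum : ∑ i : Fin k, w i.castSucc = ∑ i : Fin k, w' i.castSucc := by
      have := hpe (Fin.last m)
      rwa [hm w, hm w'] at this
    have hwlast : w (Fin.last k) = w' (Fin.last k) := by
      have h1 := hw1; have h2 := hw'1
      rw [Fin.sum_univ_castSucc] at h1 h2
      linarith [hsum]
    -- partial p-sums agree for each old measurement
    have hpold : ∀ j : Fin m,
        ∑ i : Fin k, w i.castSucc * p i.castSucc j
        = ∑ i : Fin k, w' i.castSucc * p i.castSucc j := by
      intro j
      have h := hpe (Fin.castSucc j)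
      rw [Fin.sum_univ_castSucc, Fin.sum_univ_castSucc] at h
      have hjm : ((Fin.castSucc j : Fin (m+1)):ℕ) < m := by simpa using j.isLt
      simp only [dif_pos hjm] at h
      have he : (⟨((Fin.castSucc j : Fin (m+1)):ℕ), hjm⟩ : Fin m) = j := Fin.ext rfl
      rw [he, hwlast] at h
      exact add_right_cancel h
    cases l with
    | none =>
      rw [Fin.sum_univ_castSucc, Fin.sum_univ_castSucc]
      simp [Fin.is_lt, hwlast]
    | some a =>
      rw [Fin.sum_univ_castSucc, Fin.sum_univ_castSucc]
      have h1 : ∀ i : Fin k, ((i.castSucc : Fin (k+1)):ℕ) < k := fun i => i.isLt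
      have hnl : ¬ ((Fin.last k : Fin (k+1)):ℕ) < k := by simp
      simp only [dif_neg hnl, mul_zero, add_zero]
      have hrw : ∀ (v : Fin (k+1) → ℝ),
          (∑ i : Fin k, v i.castSucc *
            (if h : ((i.castSucc : Fin (k+1)):ℕ) < k then μ ⟨(i.castSucc : Fin (k+1)), h⟩ a else 0))
          = ∑ i : Fin k, v i.castSucc * μ ⟨(i.castSucc : Fin (k+1)), h1 i⟩ a :=
        fun v => Finset.sum_congr rfl (fun i _ => by rw [dif_pos (h1 i)])
      rw [hrw w, hrw w']
      -- goal: ∑ i : Fin k, w i.castSucc * μ ⟨↑i.castSucc, _⟩ a = same for w'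
      set s := ∑ i : Fin k, w i.castSucc with hs
      have hs0 : 0 ≤ s := Finset.sum_nonneg (fun i _ => hw0 _)
      rcases eq_or_lt_of_le hs0 with hse | hsp
      · have hz : ∀ i : Fin k, w i.castSucc = 0 := fun i =>
          (Finset.sum_eq_zero_iff_of_nonneg (fun i _ => hw0 (Fin.castSucc i))).mp
            hse.symm i (Finset.mem_univ i)
        have hse' : ∑ i : Fin k, w' i.castSucc = 0 := by rw [← hsum, ← hse]
        have hz' : ∀ i : Fin k, w' i.castSucc = 0 := fun i =>
          (Finset.sum_eq_zero_iff_of_nonneg (fun i _ => hw'0 (Fin.castSucc i))).mp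
            hse' i (Finset.mem_univ i)
        simp [hz, hz']
      · have hs' : ∑ i : Fin k, w' i.castSucc = s := hsum.symm
        have hcs : ∀ i : Fin (k+1-1),
            (Fin.castLE (Nat.sub_le (k+1) 1) i : Fin (k+1)) = Fin.castSucc ⟨i, i.isLt⟩ :=
          fun i => Fin.ext rfl
        have key := hNC (fun i : Fin (k+1-1) => w (Fin.castSucc ⟨i, i.isLt⟩) / s)
          (fun i => w' (Fin.castSucc ⟨i, i.isLt⟩) / s)
          (fun i => div_nonneg (hw0 _) hs0)
          (fun i => div_nonneg (hw'0 _) hs0)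
          (by rw [← Finset.sum_div]
              rw [show (∑ i : Fin (k+1-1), w (Fin.castSucc ⟨i, i.isLt⟩)) = s from rfl]
              exact div_self (ne_of_gt hsp))
          (by rw [← Finset.sum_div]
              rw [show (∑ i : Fin (k+1-1), w' (Fin.castSucc ⟨i, i.isLt⟩))
                = ∑ i : Fin k, w' i.castSucc from rfl, hs']
              exact div_self (ne_of_gt hsp))
          (by
            intro j
            simp only [hcs, div_mul_eq_mul_div, ← Finset.sum_div]
            rw [show (∑ i : Fin (k+1-1), w (Fin.castSucc ⟨i, i.isLt⟩)
                * p (Fin.castSucc ⟨i, i.isLt⟩) j)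
              = ∑ i : Fin k, w i.castSucc * p i.castSucc j from rfl]
            rw [show (∑ i : Fin (k+1-1), w' (Fin.castSucc ⟨i, i.isLt⟩)
                * p (Fin.castSucc ⟨i, i.isLt⟩) j)
              = ∑ i : Fin k, w' i.castSucc * p i.castSucc j from rfl]
            rw [hpold j])
          a
        simp only [div_mul_eq_mul_div, ← Finset.sum_div] at key
        rw [div_eq_div_iff (ne_of_gt hsp) (ne_of_gt hsp)] at key
        exact mul_right_cancel₀ (ne_of_gt hsp) key
end

section
/- Let p : Fin n → Fin m → ℝ with 0 ≤ p i j ≤ 1 be the outcome-0 statistics of n preparations under m binary measurements. Let Λ = (Fin m → Fin 2), fix an enumeration λ_0, …, λ_{2^m−1} of Λ, and define μ_i(λ) = ∏_{j} (if λ j = 0 then p i j else 1 − p i j). Define N = 2^m − 1 additional binary-measurement statistics q : Fin n → Fin N → ℝ by q i t = μ_i(λ_t). Then: (1) each original statistic p i j is an affine function of (q i t)_{t < N}, namely p i j = ∑_{t < N, λ_t j = 0} q i t + (if λ_{N} j = 0 then 1 − ∑_{t < N} q i t else 0); and (2) the combined statistics on Fin n → Fin (m+N) → ℝ, given by p in the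 first m coordinates and q in the last N, admit a preparation-noncontextual ontological model. -/
lemma pnc_prod_sum {m : ℕ} (f : Fin m → Fin 2 → ℝ) :
    ∑ l : Fin m → Fin 2, ∏ j, f j (l j) = ∏ j, (f j 0 + f j 1) := by
  have h := Finset.prod_univ_sum (fun _ : Fin m => (Finset.univ : Finset (Fin 2))) f
  simp only [Fintype.piFinset_univ] at h
  rw [← h]
  exact Finset.prod_congr rfl (fun j _ => by rw [Fin.sum_univ_two])

lemma pnc_sum_ind {m : ℕ} (f : Fin m → Fin 2 → ℝ) (hf : ∀ j, f j 0 + f j 1 = 1)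
    (j : Fin m) :
    ∑ l : Fin m → Fin 2, (∏ j', f j' (l j')) * (if l j = 0 then 1 else 0) = f j 0 := by
  set g : Fin m → Fin 2 → ℝ := fun j' x =>
    if j' = j then (if x = 0 then f j 0 else 0) else f j' x with hg
  have key : ∀ l : Fin m → Fin 2,
      (∏ j', f j' (l j')) * (if l j = 0 then 1 else 0) = ∏ j', g j' (l j') := by
    intro l
    by_cases h : l j = 0
    · simp only [h, if_pos, mul_one]
      refine Finset.prod_congr rfl (fun j' _ => ?_)
      by_cases hj : j' = j
      · subst hj; simp [hg, h]
      · simp [hg, hj]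
    · rw [if_neg h, mul_zero]
      refine (Finset.prod_eq_zero (Finset.mem_univ j) ?_).symm
      simp [hg, h]
  rw [Finset.sum_congr rfl (fun l _ => key l), pnc_prod_sum]
  have : ∀ j', g j' 0 + g j' 1 = if j' = j then f j 0 else 1 := by
    intro j'
    by_cases hj : j' = j <;> simp [hg, hj, hf j']
  rw [Finset.prod_congr rfl (fun j' _ => this j')]
  simp

lemma pnc_split_sum {m : ℕ} (G : Fin (2 ^ m) → ℝ) (h : 2 ^ m - 1 < 2 ^ m) :
    ∑ s, G s = (∑ t : Fin (2 ^ m - 1), G (Fin.castLE (Nat.sub_le _ _) t)) +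
      G ⟨2 ^ m - 1, h⟩ := by
  have h1 : 0 < 2 ^ m := by positivity
  have h2 : 2 ^ m - 1 + 1 = 2 ^ m := by omega
  rw [← Equiv.sum_comp (finCongr h2) G, Fin.sum_univ_castSucc]
  congr 1

/-- Adding the `2^m - 1` measurements "is the ontic state `λ_t`?" (for the trivial
product-distribution model on deterministic assignments) renders the original statistics
affine functions of the new ones, and the combined statistics admit a
preparation-noncontextual model. -/
theorem product_model_measurements_noncontextual
    (n m : ℕ) (p : Fin n → Fin m → ℝ)
    (hp : ∀ i j, 0 ≤ p i j ∧ p i j ≤ 1)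
    (e : Fin (2 ^ m) ≃ (Fin m → Fin 2))
    (μ : Fin n → (Fin m → Fin 2) → ℝ)
    (hμ : ∀ i l, μ i l = ∏ j, if l j = 0 then p i j else 1 - p i j)
    (q : Fin n → Fin (2 ^ m - 1) → ℝ)
    (hq : ∀ i t, q i t = μ i (e (Fin.castLE (Nat.sub_le _ _) t))) :
    (∀ i j, p i j =
        (∑ t : Fin (2 ^ m - 1),
          if e (Fin.castLE (Nat.sub_le _ _) t) j = 0 then q i t else 0) +
        (if e ⟨2 ^ m - 1, by have : 0 < 2 ^ m := (by positivity); omega⟩ j = 0 then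
          1 - ∑ t, q i t else 0)) ∧
    IsPNCModel (fun (i : Fin n) (j : Fin (m + (2 ^ m - 1))) =>
      if h : (j : ℕ) < m then p i ⟨j, h⟩
      else q i ⟨(j : ℕ) - m, by have := j.isLt; omega⟩) := by
  have hpow : (2 : ℕ) ^ m - 1 < 2 ^ m := by
    have : 0 < 2 ^ m := by positivity
    omega
  set f : Fin n → Fin m → Fin 2 → ℝ :=
    fun i j x => if x = 0 then p i j else 1 - p i j with hfdef
  have hμf : ∀ i l, μ i l = ∏ j', f i j' (l j') := hμ
  have hf1 : ∀ i j, f i j 0 + f i j 1 = 1 := by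
    intro i j; simp [hfdef]
  have hμ0 : ∀ i l, 0 ≤ μ i l := by
    intro i l
    rw [hμf]
    refine Finset.prod_nonneg fun j _ => ?_
    simp only [hfdef]
    split
    · exact (hp i j).1
    · linarith [(hp i j).2]
  have hμsum : ∀ i, ∑ l, μ i l = 1 := by
    intro i
    simp only [hμf]
    rw [pnc_prod_sum]
    exact Finset.prod_eq_one fun j _ => hf1 i j
  have hμp : ∀ i j, ∑ l, μ i l * (if l j = 0 then 1 else 0) = p i j := by
    intro i j
    simp only [hμf]
    have h := pnc_sum_ind (f i) (hf1 i) j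
    simpa [hfdef] using h
  have hμpoint : ∀ i (l0 : Fin m → Fin 2),
      ∑ l, μ i l * (if l = l0 then 1 else 0) = μ i l0 := by
    intro i l0
    simp [mul_ite, mul_one, mul_zero]
  have hqlast : ∀ i, μ i (e ⟨2 ^ m - 1, hpow⟩) = 1 - ∑ t, q i t := by
    intro i
    have h := pnc_split_sum (fun s => μ i (e s)) hpow
    rw [Equiv.sum_comp e (μ i), hμsum i] at h
    have hqq : ∑ t, q i t = ∑ t : Fin (2 ^ m - 1), μ i (e (Fin.castLE (Nat.sub_le _ _) t)) :=
      Finset.sum_congr rfl fun t _ => hq i t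
    rw [hqq]
    linarith
  constructor
  · intro i j
    have h1 : ∑ s : Fin (2 ^ m), μ i (e s) * (if e s j = 0 then 1 else 0) = p i j := by
      rw [Equiv.sum_comp e (fun l => μ i l * (if l j = 0 then 1 else 0))]
      exact hμp i j
    rw [pnc_split_sum _ hpow] at h1
    rw [← h1]
    congr 1
    · refine Finset.sum_congr rfl fun t _ => ?_
      rw [hq]
      split <;> simp
    · rw [show (⟨2 ^ m - 1, by have : 0 < 2 ^ m := (by positivity); omega⟩ : Fin (2 ^ m))
        = ⟨2 ^ m - 1, hpow⟩ from rfl, hqlast i]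
      split <;> simp
  · refine ⟨(Fin m → Fin 2), inferInstance, μ,
      fun j l => if h : (j : ℕ) < m then (if l ⟨j, h⟩ = 0 then 1 else 0)
        else (if l = e (Fin.castLE (Nat.sub_le _ _)
          (⟨(j : ℕ) - m, by have := j.isLt; omega⟩ : Fin (2 ^ m - 1))) then 1 else 0),
      hμ0, hμsum, ?_, ?_, ?_⟩
    · intro j l
      dsimp only
      split_ifs <;> norm_num
    · intro i j
      by_cases h : (j : ℕ) < m
      · simp only [dif_pos h]
        exact hμp i ⟨j, h⟩
      · simp only [dif_neg h]
        rw [hq]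
        exact hμpoint i _
    · intro w w' hw hw' hw1 hw1' hstat l
      have hqstat : ∀ t : Fin (2 ^ m - 1),
          ∑ i, w i * q i t = ∑ i, w' i * q i t := by
        intro t
        have hlt : m + (t : ℕ) < m + (2 ^ m - 1) := by have := t.isLt; omega
        have key := hstat ⟨m + (t : ℕ), hlt⟩
        have hcond : ¬ ((⟨m + (t : ℕ), hlt⟩ : Fin (m + (2 ^ m - 1))) : ℕ) < m := by
          show ¬ m + (t : ℕ) < m; omega
        simp only [dif_neg hcond] at key
        simpa [Nat.add_sub_cancel_left] using key
      have hμstat : ∀ t : Fin (2 ^ m - 1),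
          ∑ i, w i * μ i (e (Fin.castLE (Nat.sub_le _ _) t))
            = ∑ i, w' i * μ i (e (Fin.castLE (Nat.sub_le _ _) t)) := by
        intro t
        have := hqstat t
        simpa [hq] using this
      set s := e.symm l with hs
      have hl : e s = l := e.apply_symm_apply l
      by_cases hlt : (s : ℕ) < 2 ^ m - 1
      · have hleq : l = e (Fin.castLE (Nat.sub_le _ _) (⟨(s : ℕ), hlt⟩ : Fin (2 ^ m - 1))) := by
          rw [← hl]; congr 1
        rw [hleq]
        exact hμstat ⟨(s : ℕ), hlt⟩
      · have hs2 : (s : ℕ) = 2 ^ m - 1 := by have := s.isLt; omega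
        have hleq : l = e ⟨2 ^ m - 1, hpow⟩ := by
          rw [← hl]; congr 1; exact Fin.ext hs2
        rw [hleq]
        simp only [hqlast, mul_sub, mul_one, Finset.sum_sub_distrib, hw1, hw1',
          Finset.mul_sum]
        congr 1
        have hcomm : ∑ x : Fin n, ∑ t : Fin (2 ^ m - 1), w' x * q x t
            = ∑ t : Fin (2 ^ m - 1), ∑ x : Fin n, w' x * q x t := Finset.sum_comm
        have hcomm' : ∑ x : Fin n, ∑ t : Fin (2 ^ m - 1), w x * q x t
            = ∑ t : Fin (2 ^ m - 1), ∑ x : Fin n, w x * q x t := Finset.sum_comm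
        rw [hcomm, hcomm']
        exact Finset.sum_congr rfl fun t _ => hqstat t
end

section
/- Let M be a matrix over ℝ all of whose entries are 0 or 1, and suppose M has rank k. Then the number of distinct rows of M is at most 2^k. -/
open Matrix
/-- A (0,1)-valued real matrix of rank `k` has at most `2^k` distinct rows. -/
theorem binary_matrix_distinct_rows_le_two_pow_rank
    (r c k : ℕ) (M : Matrix (Fin r) (Fin c) ℝ)
    (h01 : ∀ i j, M i j = 0 ∨ M i j = 1)
    (hrank : M.rank = k) :
    (Finset.univ.image (fun i => M i)).card ≤ 2 ^ k := by
  classical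
  obtain ⟨s, hsub, hspan, hli⟩ := exists_linearIndependent ℝ (Set.range Mᵀ)
  have hfin : s.Finite := hli.setFinite
  haveI : Fintype s := hfin.fintype
  have hcard : Fintype.card s = k := by
    have h1 : Module.finrank ℝ (Submodule.span ℝ s) = s.toFinset.card :=
      finrank_span_set_eq_card hli
    rw [hspan, show Set.range Mᵀ = Set.range M.col from rfl, ← Matrix.rank_eq_finrank_span_cols, hrank] at h1
    rw [← Set.toFinset_card, h1]
  -- choose a column index for each element of s
  have hidx : ∀ w : s, ∃ j, Mᵀ j = w.1 := fun w => hsub w.2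
  choose idx hidxspec using hidx
  set F : (Fin c → ℝ) → (s → ℝ) := fun u w => u (idx w) with hF
  have key : ∀ i i' : Fin r, F (M i) = F (M i') → M i = M i' := by
    intro i i' h
    set L : (Fin r → ℝ) →ₗ[ℝ] ℝ := (LinearMap.proj i : (Fin r → ℝ) →ₗ[ℝ] ℝ) - LinearMap.proj i' with hL
    have hker : Submodule.span ℝ s ≤ LinearMap.ker L := by
      rw [Submodule.span_le]
      intro w hw
      have := congrFun h ⟨w, hw⟩
      simp only [hF] at this
      have hcol := hidxspec ⟨w, hw⟩
      have e1 : w i = M i (idx ⟨w, hw⟩) := (congrFun hcol i).symm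
      have e2 : w i' = M i' (idx ⟨w, hw⟩) := (congrFun hcol i').symm
      show L w = 0
      simp only [hL, LinearMap.sub_apply, LinearMap.proj_apply]
      rw [e1, e2, this, sub_self]
    funext j
    have hmem : Mᵀ j ∈ Submodule.span ℝ s := by
      rw [hspan]; exact Submodule.subset_span ⟨j, rfl⟩
    have h2 := hker hmem
    rw [LinearMap.mem_ker] at h2
    have h3 : M i j - M i' j = 0 := by
      simpa [hL, Matrix.transpose_apply] using h2
    linarith
  have hsub2 : ∀ u ∈ Finset.univ.image (fun i => M i),
      F u ∈ Fintype.piFinset (fun _ : s => ({0, 1} : Finset ℝ)) := by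
    intro u hu
    simp only [Finset.mem_image] at hu
    obtain ⟨i, -, rfl⟩ := hu
    rw [Fintype.mem_piFinset]
    intro w
    rcases h01 i (idx w) with h | h <;> simp [hF, h]
  have hinj : Set.InjOn F (Finset.univ.image (fun i => M i)) := by
    intro u hu v hv huv
    simp only [Finset.coe_image, Set.mem_image] at hu hv
    obtain ⟨i, -, rfl⟩ := hu
    obtain ⟨i', -, rfl⟩ := hv
    exact key i i' huv
  calc (Finset.univ.image (fun i => M i)).card
      ≤ (Fintype.piFinset (fun _ : s => ({0, 1} : Finset ℝ))).card :=
        Finset.card_le_card_of_injOn F hsub2 hinj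
    _ = 2 ^ k := by
        rw [Fintype.card_piFinset]
        simp [hcard]
end

section
/- Let k be a natural number and n = 2^k. Let Λ be a finite set, let μ_1, …, μ_n be probability distributions on Λ, and let ξ_1, …, ξ_n : Λ → ℝ with 0 ≤ ξ_i(λ) ≤ 1 satisfy ∑_λ μ_i(λ)·ξ_i(λ) = 1 for every i, and ∑_λ μ_j(λ)·ξ_i(λ) < 1 for every i ≠ j. Then the cardinality of Λ is at least k + 1. -/
/-- A strengthening of Hardy's result: modelling `2^k` preparations with perfectly
distinguishing measurements (each succeeding with certainty on its own preparation and
failing with positive probability on the others) requires at least `k + 1` ontic states. -/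
theorem ontic_states_lower_bound
    (k : ℕ) (Λ : Type) [Fintype Λ]
    (μ : Fin (2 ^ k) → Λ → ℝ) (ξ : Fin (2 ^ k) → Λ → ℝ)
    (hμ0 : ∀ i l, 0 ≤ μ i l) (hμ1 : ∀ i, ∑ l, μ i l = 1)
    (hξ : ∀ i l, 0 ≤ ξ i l ∧ ξ i l ≤ 1)
    (hdiag : ∀ i, ∑ l, μ i l * ξ i l = 1)
    (hoff : ∀ i j, i ≠ j → ∑ l, μ j l * ξ i l < 1) :
    k + 1 ≤ Fintype.card Λ := by
  classical
  set S : Fin (2 ^ k) → Finset Λ := fun i => Finset.univ.filter (fun l => 0 < μ i l) with hS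
  -- ξ i equals 1 on the support of μ i
  have hxi1 : ∀ i l, 0 < μ i l → ξ i l = 1 := by
    intro i l hl
    by_contra h
    have hlt : ξ i l < 1 := lt_of_le_of_ne (hξ i l).2 h
    have hsum : ∑ x, μ i x * ξ i x < ∑ x, μ i x := by
      apply Finset.sum_lt_sum
      · intro x _; nlinarith [(hξ i x).1, (hξ i x).2, hμ0 i x]
      · exact ⟨l, Finset.mem_univ l, by nlinarith⟩
    rw [hμ1 i, hdiag i] at hsum
    exact lt_irrefl 1 hsum
  -- supports are pairwise non-nested
  have hnotsub : ∀ i j, i ≠ j → ¬ S j ⊆ S i := by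
    intro i j hij hsub
    have heq : ∑ l, μ j l * ξ i l = 1 := by
      rw [← hμ1 j]
      apply Finset.sum_congr rfl
      intro l _
      rcases lt_or_eq_of_le (hμ0 j l) with h | h
      · have hmem : l ∈ S j := by simp [hS, h]
        have hi : 0 < μ i l := by have := hsub hmem; simpa [hS] using this
        rw [hxi1 i l hi, mul_one]
      · rw [← h]; ring
    exact absurd heq (ne_of_lt (hoff i j hij))
  have hinj : Function.Injective S := by
    intro i j h
    by_contra hij
    exact hnotsub i j hij (h ▸ Finset.Subset.refl _)
  -- antichain
  set 𝒜 : Finset (Finset Λ) := Finset.univ.image S with hA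
  have hanti : IsAntichain (· ⊆ ·) (𝒜 : Set (Finset Λ)) := by
    rintro A hAmem B hBmem hne hsub
    simp only [hA, Finset.coe_image, Finset.coe_univ, Set.image_univ, Set.mem_range] at hAmem hBmem
    obtain ⟨i, rfl⟩ := hAmem
    obtain ⟨j, rfl⟩ := hBmem
    exact hnotsub j i (fun h => hne (by rw [h])) hsub
  have hcardA : 𝒜.card = 2 ^ k := by
    rw [hA, Finset.card_image_of_injective _ hinj, Finset.card_univ, Fintype.card_fin]
  have hsperner := IsAntichain.sperner hanti
  rw [hcardA] at hsperner
  set m := Fintype.card Λ with hm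
  -- Λ is nonempty
  have hΛ : Nonempty Λ := by
    by_contra h
    have : IsEmpty Λ := not_nonempty_iff.mp h
    have h1 := hμ1 ⟨0, Nat.two_pow_pos k⟩
    rw [Finset.univ_eq_empty, Finset.sum_empty] at h1
    norm_num at h1
  have hm1 : 1 ≤ m := Fintype.card_pos
  -- middle binomial is strictly less than 2^m
  have hmid : m.choose (m / 2) < 2 ^ m := by
    have hne : m / 2 ≠ m := Nat.ne_of_lt (Nat.div_lt_self hm1 one_lt_two)
    have hsub : ({m / 2, m} : Finset ℕ) ⊆ Finset.range (m + 1) := by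
      intro x hx
      simp only [Finset.mem_insert, Finset.mem_singleton] at hx
      rcases hx with rfl | rfl
      · exact Finset.mem_range.mpr (Nat.lt_succ_of_le (Nat.div_le_self m 2))
      · exact Finset.mem_range.mpr (Nat.lt_succ_self m)
    have hle : m.choose (m / 2) + m.choose m ≤ ∑ j ∈ Finset.range (m + 1), m.choose j := by
      rw [← Finset.sum_pair hne]
      exact Finset.sum_le_sum_of_subset hsub
    rw [Nat.sum_range_choose, Nat.choose_self] at hle
    omega
  have : (2 : ℕ) ^ k < 2 ^ m := lt_of_le_of_lt hsperner hmid
  have hkm : k < m := (Nat.pow_lt_pow_iff_right one_lt_two).mp this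
  omega
end

section
/- Let p : Fin n → Fin m → ℝ with 0 ≤ p i j ≤ 1 be the outcome-0 statistics of n preparations under m known binary measurements. Let Λ₀ = (Fin m → Fin 2) be the set of deterministic assignments, and for each i let Δ_i be the set of probability distributions μ on Λ₀ satisfying ∑_{λ : λ j = 0} μ(λ) = p i j for every j < m. Suppose that for every pair of disjoint nonempty subsets I, J ⊆ Fin n, the convex hull of ⋃_{i ∈ I} Δ_i and the convex hull of ⋃_{j ∈ J} Δ_j are disjoint (as subsets of ℝ^{Λ₀}). Then for every m' with n ≥ m + m' + 2 and every q : Fin n → Fin m' → ℝ with 0 ≤ q i t ≤ 1, the combined statistics r : Fin n → Fin (m + m') → ℝ (given by p on the first m measurements and q on the last m') admit no preparation-noncontextual ontological model with finite ontic state space. -/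
/-- Product distribution on deterministic assignments induced by outcome-0 probabilities `g`. -/
def detDist {m : ℕ} (g : Fin m → ℝ) : (Fin m → Fin 2) → ℝ :=
  fun lam => ∏ j, if lam j = 0 then g j else 1 - g j

lemma detDist_nonneg {m : ℕ} {g : Fin m → ℝ} (hg : ∀ j, 0 ≤ g j ∧ g j ≤ 1)
    (lam : Fin m → Fin 2) : 0 ≤ detDist g lam := by
  apply Finset.prod_nonneg
  intro j _
  split
  · exact (hg j).1
  · linarith [(hg j).2]

lemma detDist_sum {m : ℕ} (g : Fin m → ℝ) : ∑ lam, detDist g lam = 1 := by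
  unfold detDist
  rw [← Fintype.prod_sum (fun j (b : Fin 2) => if b = 0 then g j else 1 - g j)]
  simp [Fin.sum_univ_two]

lemma detDist_marg {m : ℕ} (g : Fin m → ℝ) (j0 : Fin m) :
    ∑ lam ∈ Finset.univ.filter (fun lam : Fin m → Fin 2 => lam j0 = 0), detDist g lam = g j0 := by
  rw [Finset.sum_filter]
  have key : ∀ lam : Fin m → Fin 2, (if lam j0 = 0 then detDist g lam else 0) =
      ∏ j, (if j = j0 then (if lam j = 0 then g j else 0)
            else (if lam j = 0 then g j else 1 - g j)) := by
    intro lam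
    by_cases h : lam j0 = 0
    · rw [if_pos h]
      unfold detDist
      apply Finset.prod_congr rfl
      intro j _
      by_cases hj : j = j0
      · subst hj; rw [if_pos rfl, if_pos h, if_pos h]
      · rw [if_neg hj]
    · rw [if_neg h]
      symm
      apply Finset.prod_eq_zero (Finset.mem_univ j0)
      rw [if_pos rfl, if_neg h]
  simp_rw [key]
  rw [← Fintype.prod_sum (fun j (b : Fin 2) => if j = j0 then (if b = 0 then g j else 0)
        else (if b = 0 then g j else 1 - g j))]
  have h2 : ∀ j, (∑ b : Fin 2, if j = j0 then (if b = 0 then g j else 0)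
        else (if b = 0 then g j else 1 - g j)) = if j = j0 then g j else 1 := by
    intro j
    by_cases hj : j = j0 <;> simp [hj, Fin.sum_univ_two]
  simp_rw [h2]
  rw [Finset.prod_ite_eq' Finset.univ j0 (fun j => g j)]
  simp

/-- Pushforward of the ontic distributions onto deterministic assignments. -/
def pushforward {n m : ℕ} {Λ : Type} [Fintype Λ] (μ : Fin n → Λ → ℝ) (ξ : Fin m → Λ → ℝ) :
    Fin n → (Fin m → Fin 2) → ℝ :=
  fun i lam => ∑ l, μ i l * detDist (fun j => ξ j l) lam

theorem aux_no_model {n m m' : ℕ} (p : Fin n → Fin m → ℝ)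
    (Δ : Fin n → Set ((Fin m → Fin 2) → ℝ))
    (hΔ : ∀ i, Δ i = {μ : (Fin m → Fin 2) → ℝ |
      (∀ l, 0 ≤ μ l) ∧ (∑ l, μ l = 1) ∧
      ∀ j : Fin m, ∑ l ∈ Finset.univ.filter (fun l : Fin m → Fin 2 => l j = 0), μ l = p i j})
    (hsep : ∀ I J : Finset (Fin n), I.Nonempty → J.Nonempty → Disjoint I J →
      Disjoint (convexHull ℝ (⋃ i ∈ I, Δ i)) (convexHull ℝ (⋃ j ∈ J, Δ j)))
    (hm' : m + m' + 2 ≤ n)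
    (r : Fin n → Fin (m + m') → ℝ)
    (hre : ∀ i (j : Fin m), r i (Fin.castAdd m' j) = p i j) :
    ¬ IsPNCModel r := by
  rintro ⟨Λ, instΛ, μ, ξ, hμ0, hμ1, hξ01, hstat, hpnc⟩
  -- Step 1: linear dependence of (r i, 1)
  obtain ⟨c, hc0, i0, hi0⟩ : ∃ c : Fin n → ℝ,
      (∑ i, c i • ((fun j => r i j, (1:ℝ)) : (Fin (m + m') → ℝ) × ℝ) = 0) ∧ ∃ i, c i ≠ 0 := by
    rw [← Fintype.not_linearIndependent_iff]
    intro h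
    have := h.fintype_card_le_finrank
    simp [Module.finrank_prod, Module.finrank_pi] at this
    omega
  have hcs : ∑ i, c i = 0 := by
    have := congrArg Prod.snd hc0
    simpa [Prod.snd_sum] using this
  have hcr : ∀ j, ∑ i, c i * r i j = 0 := by
    intro j
    have h1 := congrArg Prod.fst hc0
    rw [Prod.fst_sum] at h1
    have h2 := congrFun h1 j
    simpa [Finset.sum_apply] using h2
  -- Step 2: positive/negative parts
  have hpos : ∃ i, 0 < c i := by
    by_contra h
    push_neg at h
    have := (Finset.sum_eq_zero_iff_of_nonpos (fun i _ => h i)).1 hcs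
    exact hi0 (this i0 (Finset.mem_univ _))
  have hneg : ∃ i, c i < 0 := by
    by_contra h
    push_neg at h
    have := (Finset.sum_eq_zero_iff_of_nonneg (fun i _ => h i)).1 hcs
    exact hi0 (this i0 (Finset.mem_univ _))
  set s : ℝ := ∑ i, max (c i) 0 with hsdef
  have hs0 : 0 < s := by
    obtain ⟨i, hi⟩ := hpos
    exact Finset.sum_pos' (fun i _ => le_max_right _ _)
      ⟨i, Finset.mem_univ _, lt_max_iff.2 (Or.inl hi)⟩
  have hsm : ∑ i, max (-c i) 0 = s := by
    have h1 : ∑ i, (max (c i) 0 - max (-c i) 0) = 0 := by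
      simpa [max_zero_sub_max_neg_zero_eq_self] using hcs
    rw [Finset.sum_sub_distrib] at h1
    linarith
  set w : Fin n → ℝ := fun i => max (c i) 0 / s with hwdef
  set w' : Fin n → ℝ := fun i => max (-c i) 0 / s with hw'def
  have hw0 : ∀ i, 0 ≤ w i := fun i => div_nonneg (le_max_right _ _) hs0.le
  have hw'0 : ∀ i, 0 ≤ w' i := fun i => div_nonneg (le_max_right _ _) hs0.le
  have hw1 : ∑ i, w i = 1 := by
    rw [hwdef, ← Finset.sum_div]
    exact div_self hs0.ne'
  have hw'1 : ∑ i, w' i = 1 := by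
    rw [hw'def, ← Finset.sum_div, hsm]
    exact div_self hs0.ne'
  have hdiff : ∀ i, w i - w' i = c i / s := by
    intro i
    rw [hwdef, hw'def]
    rw [div_sub_div_same, max_zero_sub_max_neg_zero_eq_self]
  have hstats : ∀ j, ∑ i, w i * r i j = ∑ i, w' i * r i j := by
    intro j
    have h1 : ∑ i, (w i - w' i) * r i j = 0 := by
      have he : ∀ i, (w i - w' i) * r i j = c i * r i j / s := by
        intro i; rw [hdiff, div_mul_eq_mul_div]
      simp_rw [he]
      rw [← Finset.sum_div, hcr j, zero_div]
    have h2 : ∑ i, ((w i * r i j) - (w' i * r i j)) = 0 := by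
      simpa [sub_mul] using h1
    rw [Finset.sum_sub_distrib] at h2
    linarith
  have heqμ : ∀ l, ∑ i, w i * μ i l = ∑ i, w' i * μ i l :=
    hpnc w w' hw0 hw'0 hw1 hw'1 hstats
  -- Step 3: known-measurement statistics
  have hstat' : ∀ i (j : Fin m), ∑ l, μ i l * ξ (Fin.castAdd m' j) l = p i j := by
    intro i j
    rw [hstat i (Fin.castAdd m' j), hre i j]
  -- Step 4: pushforward lies in the polytopes
  have hμhatmem : ∀ i, pushforward μ (fun j => ξ (Fin.castAdd m' j)) i ∈ Δ i := by
    intro i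
    rw [hΔ]
    refine ⟨?_, ?_, ?_⟩
    · intro lam
      exact Finset.sum_nonneg fun l _ => mul_nonneg (hμ0 i l)
        (detDist_nonneg (fun j => hξ01 (Fin.castAdd m' j) l) lam)
    · unfold pushforward
      rw [Finset.sum_comm]
      simp_rw [← Finset.mul_sum, detDist_sum, mul_one]
      exact hμ1 i
    · intro j
      unfold pushforward
      rw [Finset.sum_comm]
      simp_rw [← Finset.mul_sum, detDist_marg]
      exact hstat' i j
  set μhat : Fin n → (Fin m → Fin 2) → ℝ := pushforward μ (fun j => ξ (Fin.castAdd m' j))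
    with hμhatdef
  -- Step 5: the common point
  set x : (Fin m → Fin 2) → ℝ := fun lam => ∑ i, w i * μhat i lam with hxdef
  have hx' : ∀ lam, x lam = ∑ i, w' i * μhat i lam := by
    intro lam
    have swap : ∀ u : Fin n → ℝ, ∑ i, u i * μhat i lam
        = ∑ l, (∑ i, u i * μ i l) * detDist (fun j => ξ (Fin.castAdd m' j) l) lam := by
      intro u
      rw [hμhatdef]
      unfold pushforward
      simp_rw [Finset.mul_sum, ← mul_assoc]
      rw [Finset.sum_comm]
      simp_rw [← Finset.sum_mul]
    show (∑ i, w i * μhat i lam) = _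
    rw [swap w, swap w']
    exact Finset.sum_congr rfl fun l _ => by rw [heqμ l]
  set I : Finset (Fin n) := Finset.univ.filter (fun i => 0 < c i) with hIdef
  set J : Finset (Fin n) := Finset.univ.filter (fun i => c i < 0) with hJdef
  have hIne : I.Nonempty := by
    obtain ⟨i, hi⟩ := hpos
    exact ⟨i, by simp [hIdef, hi]⟩
  have hJne : J.Nonempty := by
    obtain ⟨i, hi⟩ := hneg
    exact ⟨i, by simp [hJdef, hi]⟩
  have hIJ : Disjoint I J := by
    rw [Finset.disjoint_left]
    intro i hiI hiJ
    rw [hIdef, Finset.mem_filter] at hiI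
    rw [hJdef, Finset.mem_filter] at hiJ
    linarith [hiI.2, hiJ.2]
  have hwzero : ∀ i, i ∉ I → w i = 0 := by
    intro i hi
    rw [hIdef, Finset.mem_filter] at hi
    push_neg at hi
    have hci : c i ≤ 0 := hi (Finset.mem_univ _)
    rw [hwdef]
    simp [max_eq_right hci]
  have hw'zero : ∀ i, i ∉ J → w' i = 0 := by
    intro i hi
    rw [hJdef, Finset.mem_filter] at hi
    push_neg at hi
    have hci : 0 ≤ c i := hi (Finset.mem_univ _)
    rw [hw'def]
    simp [max_eq_right (neg_nonpos.2 hci)]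
  have hsumI : ∑ i ∈ I, w i = 1 := by
    rw [Finset.sum_subset (Finset.subset_univ I) (fun i _ hi => hwzero i hi), hw1]
  have hsumJ : ∑ i ∈ J, w' i = 1 := by
    rw [Finset.sum_subset (Finset.subset_univ J) (fun i _ hi => hw'zero i hi), hw'1]
  have hxI : x ∈ convexHull ℝ (⋃ i ∈ I, Δ i) := by
    have hcm := Finset.centerMass_mem_convexHull I (w := w) (z := μhat)
      (fun i _ => hw0 i) (by rw [hsumI]; norm_num)
      (fun i hi => Set.mem_iUnion₂.2 ⟨i, hi, hμhatmem i⟩)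
    have hxeq : I.centerMass w μhat = x := by
      rw [Finset.centerMass_eq_of_sum_1 _ _ hsumI]
      rw [Finset.sum_subset (Finset.subset_univ I)
        (fun i _ hi => by rw [hwzero i hi, zero_smul])]
      funext lam
      simp [hxdef, Finset.sum_apply]
    rwa [hxeq] at hcm
  have hxJ : x ∈ convexHull ℝ (⋃ j ∈ J, Δ j) := by
    have hcm := Finset.centerMass_mem_convexHull J (w := w') (z := μhat)
      (fun i _ => hw'0 i) (by rw [hsumJ]; norm_num)
      (fun i hi => Set.mem_iUnion₂.2 ⟨i, hi, hμhatmem i⟩)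
    have hxeq : J.centerMass w' μhat = x := by
      rw [Finset.centerMass_eq_of_sum_1 _ _ hsumJ]
      rw [Finset.sum_subset (Finset.subset_univ J)
        (fun i _ hi => by rw [hw'zero i hi, zero_smul])]
      funext lam
      rw [hx' lam]
      simp [Finset.sum_apply]
    rwa [hxeq] at hcm
  exact Set.disjoint_left.1 (hsep I J hIne hJne hIJ) hxI hxJ

/-- Theorem 7 of the paper: if the assignment polytopes `Δ_i` (distributions over
deterministic assignments reproducing the known statistics) are such that the convex hulls
of the unions over any two disjoint nonempty subsets of preparations are disjoint, then no
assignment of statistics to `m'` unknown measurements (with `n ≥ m + m' + 2`) admits a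
preparation-noncontextual ontological model. -/
theorem algorithm_certifies_contextuality
    (n m : ℕ) (p : Fin n → Fin m → ℝ)
    (hp : ∀ i j, 0 ≤ p i j ∧ p i j ≤ 1)
    (Δ : Fin n → Set ((Fin m → Fin 2) → ℝ))
    (hΔ : ∀ i, Δ i = {μ : (Fin m → Fin 2) → ℝ |
      (∀ l, 0 ≤ μ l) ∧ (∑ l, μ l = 1) ∧
      ∀ j : Fin m, ∑ l ∈ Finset.univ.filter (fun l : Fin m → Fin 2 => l j = 0), μ l = p i j})
    (hsep : ∀ I J : Finset (Fin n), I.Nonempty → J.Nonempty → Disjoint I J →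
      Disjoint (convexHull ℝ (⋃ i ∈ I, Δ i)) (convexHull ℝ (⋃ j ∈ J, Δ j)))
    (m' : ℕ) (hm' : m + m' + 2 ≤ n)
    (q : Fin n → Fin m' → ℝ) (hq : ∀ i t, 0 ≤ q i t ∧ q i t ≤ 1) :
    ¬ IsPNCModel (fun (i : Fin n) (j : Fin (m + m')) =>
      if h : (j : ℕ) < m then p i ⟨j, h⟩
      else q i ⟨(j : ℕ) - m, by have := j.isLt; omega⟩) := by
  exact aux_no_model p Δ hΔ hsep hm' _
    (fun i j => by simp)
end

section
/- Let r : Fin n → Fin (m + m') → ℝ with 0 ≤ r i j ≤ 1 be statistics for n preparations under m + m' binary measurements, the first m of which are 'known'. Suppose (Λ, μ, ξ) is a preparation-noncontextual ontological model for r in which every response function is deterministic, i.e. ξ_j(λ) ∈ {0,1} for all j and λ. Define the coarse-grained distributions μ'_i on Λ₀ = (Fin m → Fin 2) by μ'_i(λ') = ∑_{λ ∈ Λ : ∀ j < m, ξ_j(λ) = (if λ' j = 0 then 1 else 0)} μ_i(λ). Then: (1) each μ'_i is a probability distribution on Λ₀ satisfying ∑_{λ' : λ' j = 0} μ'_i(λ')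 = r i j for every j < m; and (2) for all weight vectors q, q' : Fin n → ℝ with nonnegative entries summing to 1, if ∑_i q i · r i j = ∑_i q' i · r i j for every j < m + m', then ∑_i q i · μ'_i = ∑_i q' i · μ'_i. -/
lemma fiber_sum {Λ V : Type} [Fintype Λ] [DecidableEq V]
    (g : Λ → V) (f : Λ → ℝ) (Q : Finset V) :
    ∑ v ∈ Q, ∑ l ∈ Finset.univ.filter (fun l => g l = v), f l
      = ∑ l ∈ Finset.univ.filter (fun l => g l ∈ Q), f l := by
  simp_rw [Finset.sum_filter]
  rw [Finset.sum_comm]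
  refine Finset.sum_congr rfl fun l _ => ?_
  rw [Finset.sum_ite_eq Q (g l) (fun _ => f l)]

/-- Coarse-graining a deterministic preparation-noncontextual ontological model over the
assignments to the `m` known measurements yields distributions on deterministic
assignments that reproduce the known statistics and still satisfy the noncontextuality
condition with respect to all `m + m'` measurements. -/
theorem coarse_graining_deterministic_model
    (n m m' : ℕ) (r : Fin n → Fin (m + m') → ℝ)
    (hr : ∀ i j, 0 ≤ r i j ∧ r i j ≤ 1)
    (Λ : Type) [Fintype Λ]
    (μ : Fin n → Λ → ℝ) (ξ : Fin (m + m') → Λ → ℝ)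
    (hmodel : IsPNCModelOn r Λ μ ξ)
    (hdet : ∀ j l, ξ j l = 0 ∨ ξ j l = 1)
    (μ' : Fin n → (Fin m → Fin 2) → ℝ)
    (hμ' : ∀ i (v : Fin m → Fin 2), μ' i v =
      ∑ l ∈ Finset.univ.filter (fun l : Λ =>
        ∀ j : Fin m, ξ (Fin.castAdd m' j) l = if v j = 0 then 1 else 0), μ i l) :
    ((∀ i v, 0 ≤ μ' i v) ∧
     (∀ i, ∑ v, μ' i v = 1) ∧
     (∀ i (j : Fin m),
        ∑ v ∈ Finset.univ.filter (fun v : Fin m → Fin 2 => v j = 0), μ' i v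
          = r i (Fin.castAdd m' j))) ∧
    (∀ w w' : Fin n → ℝ, (∀ i, 0 ≤ w i) → (∀ i, 0 ≤ w' i) →
      ∑ i, w i = 1 → ∑ i, w' i = 1 →
      (∀ j, ∑ i, w i * r i j = ∑ i, w' i * r i j) →
      ∀ v, ∑ i, w i * μ' i v = ∑ i, w' i * μ' i v) := by
  obtain ⟨hpos, hnorm, hxi, hrep, hnc⟩ := hmodel
  set a : Λ → (Fin m → Fin 2) := fun l j =>
    if ξ (Fin.castAdd m' j) l = 1 then 0 else 1 with ha
  have key : ∀ (v : Fin m → Fin 2) (l : Λ),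
      (∀ j : Fin m, ξ (Fin.castAdd m' j) l = if v j = 0 then 1 else 0) ↔ a l = v := by
    intro v l
    rw [funext_iff]
    refine forall_congr' fun j => ?_
    have hv : v j = 0 ∨ v j = 1 := by omega
    rcases hdet (Fin.castAdd m' j) l with h | h <;> rcases hv with hv | hv <;>
      simp [ha, h, hv] <;> norm_num
  have hμ'' : ∀ i v, μ' i v = ∑ l ∈ Finset.univ.filter (fun l => a l = v), μ i l := by
    intro i v
    rw [hμ' i v]
    refine Finset.sum_congr ?_ fun _ _ => rfl
    ext l
    simp [key v l]
  refine ⟨⟨?_, ?_, ?_⟩, ?_⟩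
  · intro i v
    rw [hμ'' i v]
    exact Finset.sum_nonneg fun l _ => hpos i l
  · intro i
    simp_rw [hμ'']
    have := fiber_sum a (μ i) Finset.univ
    simpa using this.trans (by simpa using hnorm i)
  · intro i j
    simp_rw [hμ'']
    rw [fiber_sum a (μ i) (Finset.univ.filter (fun v : Fin m → Fin 2 => v j = 0))]
    rw [← hrep i (Fin.castAdd m' j)]
    rw [Finset.sum_filter]
    refine Finset.sum_congr rfl fun l _ => ?_
    rcases hdet (Fin.castAdd m' j) l with h | h <;> simp [ha, h]
  · intro w w' hw hw' hws hw's heq v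
    simp_rw [hμ'', Finset.mul_sum]
    rw [Finset.sum_comm, Finset.sum_comm (γ := Fin n)]
    exact Finset.sum_congr rfl fun l _ => hnc w w' hw hw' hws hw's heq l
end

section
/- Let Λ be a finite set, let μ_1, …, μ_n be probability distributions on Λ, let ξ_1, …, ξ_n : Λ → ℝ with 0 ≤ ξ_i(λ) ≤ 1, and let ε ≥ 0 and η > 0 satisfy ε < η²/4. Suppose ∑_λ μ_i(λ)·(1 − ξ_i(λ)) ≤ ε for every i, and ∑_λ μ_j(λ)·(1 − ξ_i(λ)) ≥ η for every i ≠ j. Then the sets S_i := {λ ∈ Λ : 1 − ξ_i(λ) < η/2} are pairwise distinct: S_i ≠ S_j whenever i ≠ j. -/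
/-- In the noise-tolerant setting with `ε < η²/4`, the sets
`S_i = {λ : 1 - ξ_i(λ) < η/2}` are pairwise distinct. -/
theorem noisy_certainty_sets_pairwise_distinct
    (n : ℕ) (Λ : Type) [Fintype Λ]
    (μ : Fin n → Λ → ℝ) (ξ : Fin n → Λ → ℝ)
    (hμ0 : ∀ i l, 0 ≤ μ i l) (hμ1 : ∀ i, ∑ l, μ i l = 1)
    (hξ : ∀ i l, 0 ≤ ξ i l ∧ ξ i l ≤ 1)
    (ε η : ℝ) (hε : 0 ≤ ε) (hη : 0 < η) (hεη : ε < η ^ 2 / 4)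
    (hdiag : ∀ i, ∑ l, μ i l * (1 - ξ i l) ≤ ε)
    (hoff : ∀ i j, i ≠ j → η ≤ ∑ l, μ j l * (1 - ξ i l)) :
    ∀ i j : Fin n, i ≠ j →
      {l : Λ | 1 - ξ i l < η / 2} ≠ {l : Λ | 1 - ξ j l < η / 2} := by
  intro i j hij h
  have hmem : ∀ l : Λ, (1 - ξ i l < η / 2) ↔ (1 - ξ j l < η / 2) := by
    intro l; exact Set.ext_iff.mp h l
  classical
  set S : Finset Λ := Finset.univ.filter (fun l => 1 - ξ i l < η / 2) with hS
  -- mass of μ i outside S is ≤ 2ε/η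
  have hterm : ∀ l, 0 ≤ μ i l * (1 - ξ i l) := fun l =>
    mul_nonneg (hμ0 i l) (by linarith [(hξ i l).2])
  have hout : ∑ l ∈ Sᶜ, μ i l ≤ 2 * ε / η := by
    have h1 : (η / 2) * ∑ l ∈ Sᶜ, μ i l ≤ ∑ l ∈ Sᶜ, μ i l * (1 - ξ i l) := by
      rw [Finset.mul_sum]
      refine Finset.sum_le_sum fun l hl => ?_
      have : ¬ (1 - ξ i l < η / 2) := by
        simpa [hS] using (Finset.mem_compl.mp hl)
      have h2 : η / 2 ≤ 1 - ξ i l := le_of_not_gt this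
      calc η / 2 * μ i l = μ i l * (η / 2) := by ring
        _ ≤ μ i l * (1 - ξ i l) := mul_le_mul_of_nonneg_left h2 (hμ0 i l)
    have h2 : ∑ l ∈ Sᶜ, μ i l * (1 - ξ i l) ≤ ∑ l, μ i l * (1 - ξ i l) :=
      Finset.sum_le_sum_of_subset_of_nonneg (Finset.subset_univ _)
        (fun l _ _ => hterm l)
    have h3 : (η / 2) * ∑ l ∈ Sᶜ, μ i l ≤ ε := le_trans h1 (le_trans h2 (hdiag i))
    rw [le_div_iff₀ hη]
    nlinarith [h3]
  -- the off-diagonal sum for (j, i): η ≤ ∑ μ i l (1 - ξ j l)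
  have hbig : η ≤ ∑ l, μ i l * (1 - ξ j l) := hoff j i (Ne.symm hij)
  have hsplit : ∑ l, μ i l * (1 - ξ j l)
      = ∑ l ∈ S, μ i l * (1 - ξ j l) + ∑ l ∈ Sᶜ, μ i l * (1 - ξ j l) :=
    (Finset.sum_add_sum_compl S _).symm
  have hin : ∑ l ∈ S, μ i l * (1 - ξ j l) ≤ (η / 2) * ∑ l ∈ S, μ i l := by
    rw [Finset.mul_sum]
    refine Finset.sum_le_sum fun l hl => ?_
    have hl' : 1 - ξ i l < η / 2 := by simpa [hS] using hl
    have hlj : 1 - ξ j l < η / 2 := (hmem l).mp hl'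
    calc μ i l * (1 - ξ j l) ≤ μ i l * (η / 2) :=
          mul_le_mul_of_nonneg_left (le_of_lt hlj) (hμ0 i l)
      _ = η / 2 * μ i l := by ring
  have hout2 : ∑ l ∈ Sᶜ, μ i l * (1 - ξ j l) ≤ ∑ l ∈ Sᶜ, μ i l := by
    refine Finset.sum_le_sum fun l _ => ?_
    nlinarith [(hξ j l).1, hμ0 i l]
  have hSle1 : ∑ l ∈ S, μ i l ≤ 1 := by
    rw [← hμ1 i]
    exact Finset.sum_le_sum_of_subset_of_nonneg (Finset.subset_univ _)
      (fun l _ _ => hμ0 i l)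
  have h2eη : 2 * ε / η < η / 2 := by
    rw [div_lt_div_iff₀ hη two_pos]; nlinarith
  have hSnn : 0 ≤ ∑ l ∈ S, μ i l := Finset.sum_nonneg fun l _ => hμ0 i l
  nlinarith [hbig, hsplit, hin, hout2, hout, hSle1, h2eη, hSnn]
end

section
/- Let p : Fin n → Fin m → ℝ with 0 ≤ p i j ≤ 1, and suppose p is reproduced by an ontological model with finite ontic state space Λ of cardinality N: probability distributions μ_i on Λ and response functions ξ_j : Λ → ℝ with 0 ≤ ξ_j(λ) ≤ 1 satisfying ∑_λ μ_i(λ)·ξ_j(λ) = p i j for all i, j. Fix an enumeration λ_0, …, λ_{N−1} of Λ and define N − 1 additional binary-measurement statistics q i t = μ_i(λ_t) for t < N − 1. Then: (1) each p i j is an affine function of (q i t)_{t < N−1}, namely p i j = ∑_{t < N−1} ξ_j(λ_t)·q i t + ξ_j(λ_{N−1})·(1 − ∑_{t < N−1} q i t); and (2) the combined statistics on Fin n → Fin (m + (N−1)) → ℝ, given by p in the first m coordinates and q in the last N − 1, admit a preparation-noncontextual ontological model. -/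
/-- If statistics `p` are reproduced by an ontological model with `N` ontic states, then
adding the `N - 1` measurements "is the ontic state `λ_t`?" makes the original statistics
affine functions of the new ones, and the combined statistics admit a
preparation-noncontextual model. -/
theorem ontic_state_measurements_noncontextual
    (n m : ℕ) (p : Fin n → Fin m → ℝ)
    (hp : ∀ i j, 0 ≤ p i j ∧ p i j ≤ 1)
    (Λ : Type) [Fintype Λ] [Nonempty Λ]
    (μ : Fin n → Λ → ℝ) (ξ : Fin m → Λ → ℝ)
    (hμ0 : ∀ i l, 0 ≤ μ i l) (hμ1 : ∀ i, ∑ l, μ i l = 1)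
    (hξ : ∀ j l, 0 ≤ ξ j l ∧ ξ j l ≤ 1)
    (hrep : ∀ i j, ∑ l, μ i l * ξ j l = p i j)
    (N : ℕ) (hN : N = Fintype.card Λ)
    (e : Fin N ≃ Λ)
    (q : Fin n → Fin (N - 1) → ℝ)
    (hq : ∀ i t, q i t = μ i (e (Fin.castLE (Nat.sub_le _ _) t))) :
    (∀ i j, p i j =
        (∑ t : Fin (N - 1), ξ j (e (Fin.castLE (Nat.sub_le _ _) t)) * q i t) +
        ξ j (e ⟨N - 1, by have := Fintype.card_pos (α := Λ); omega⟩) *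
          (1 - ∑ t, q i t)) ∧
    IsPNCModel (fun (i : Fin n) (j : Fin (m + (N - 1))) =>
      if h : (j : ℕ) < m then p i ⟨j, h⟩
      else q i ⟨(j : ℕ) - m, by have := j.isLt; omega⟩) := by
  
  classical
  have hcard : 0 < Fintype.card Λ := Fintype.card_pos
  obtain ⟨M, rfl⟩ : ∃ M, N = M + 1 := ⟨N - 1, by omega⟩
  have hMlt : M + 1 - 1 < M + 1 := by omega
  have hsplit : ∀ g : Λ → ℝ, ∑ l, g l =
      (∑ t : Fin (M + 1 - 1), g (e (Fin.castLE (Nat.sub_le (M+1) 1) t))) +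
        g (e ⟨M + 1 - 1, hMlt⟩) := by
    intro g
    rw [← Equiv.sum_comp e g, Fin.sum_univ_castSucc]
    rfl
  have hlast : ∀ i, μ i (e ⟨M + 1 - 1, hMlt⟩) =
      1 - ∑ t : Fin (M + 1 - 1), μ i (e (Fin.castLE (Nat.sub_le (M+1) 1) t)) := by
    intro i
    have := hμ1 i
    rw [hsplit (μ i)] at this
    linarith
  constructor
  · intro i j
    have h1 : (∑ t : Fin (M + 1 - 1), μ i (e (Fin.castLE (Nat.sub_le (M+1) 1) t)) *
        ξ j (e (Fin.castLE (Nat.sub_le (M+1) 1) t))) +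
        μ i (e ⟨M + 1 - 1, hMlt⟩) * ξ j (e ⟨M + 1 - 1, hMlt⟩) = p i j := by
      rw [← hrep i j]; exact (hsplit (fun l => μ i l * ξ j l)).symm
    simp only [hq]
    rw [← h1, ← hlast i]
    congr 1
    · exact Finset.sum_congr rfl fun t _ => mul_comm _ _
    · exact mul_comm _ _
  · refine ⟨Λ, inferInstance, μ,
      fun j l => if h : (j : ℕ) < m then ξ ⟨j, h⟩ l
        else if l = e (Fin.castLE (Nat.sub_le (M+1) 1)
            ⟨(j : ℕ) - m, by have := j.isLt; omega⟩) then 1 else 0,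
      hμ0, hμ1, ?_, ?_, ?_⟩
    · intro j l
      by_cases h : (j : ℕ) < m
      · simpa [h] using hξ ⟨j, h⟩ l
      · simp only [h, dif_neg, not_false_iff]
        split <;> norm_num
    · intro i j
      by_cases h : (j : ℕ) < m
      · simp only [h, dif_pos]
        exact hrep i ⟨j, h⟩
      · simp only [h, dif_neg, not_false_iff, mul_ite, mul_one, mul_zero,
          Finset.sum_ite_eq', Finset.mem_univ, if_pos]
        exact (hq i _).symm
    · intro w w' hw hw' hw1 hw'1 hstat l
      have hkey : ∀ t : Fin (M + 1 - 1),
          ∑ i, w i * μ i (e (Fin.castLE (Nat.sub_le (M+1) 1) t)) =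
          ∑ i, w' i * μ i (e (Fin.castLE (Nat.sub_le (M+1) 1) t)) := by
        intro t
        have hj : (m + (t : ℕ)) < m + (M + 1 - 1) := by have := t.isLt; omega
        have := hstat ⟨m + (t : ℕ), hj⟩
        simp only [not_lt.mpr (Nat.le_add_right m (t : ℕ)), dif_neg, not_false_iff,
          Nat.add_sub_cancel_left] at this
        simpa [hq, Fin.eta] using this
      obtain ⟨k, rfl⟩ : ∃ k, l = e k := ⟨e.symm l, (e.apply_symm_apply l).symm⟩
      by_cases h : (k : ℕ) < M + 1 - 1
      · have : k = Fin.castLE (Nat.sub_le (M+1) 1) ⟨(k : ℕ), h⟩ := Fin.ext rfl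
        rw [this]
        exact hkey _
      · have hk : k = ⟨M + 1 - 1, hMlt⟩ := Fin.ext (by have := k.isLt; simp; omega)
        subst hk
        have expand : ∀ (v : Fin n → ℝ), ∑ i, v i = 1 →
            ∑ i, v i * μ i (e ⟨M + 1 - 1, hMlt⟩) =
            1 - ∑ t : Fin (M + 1 - 1), ∑ i, v i * μ i
              (e (Fin.castLE (Nat.sub_le (M+1) 1) t)) := by
          intro v hv
          simp only [hlast, mul_sub, mul_one, Finset.sum_sub_distrib, hv, Finset.mul_sum]
          rw [Finset.sum_comm]
        rw [expand w hw1, expand w' hw'1,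
          Finset.sum_congr rfl fun t _ => hkey t]
end

section
/- Let θ_n = 2π(n/5 + 1/20) for n ∈ {0,1,2,3,4}, and set x_n = sin θ_n, y_n = cos θ_n. Then the determinant of the 4×4 matrix with rows (x_1, y_1, x_1 + y_1 − 1, 1), (x_2, y_2, −x_2 + y_2 + 1, 1), (x_4, y_4, x_4 − y_4 + 1, 1), (x_3, y_3, −x_3 − y_3 − 1, 1) equals (1/4)(5√5 − √(10(√5 + 5)) + 5), which is strictly positive. -/
open Real

private lemma det4_formula (a b c d e f g h i j k l m n o p : ℝ) :
    Matrix.det !![a,b,c,d; e,f,g,h; i,j,k,l; m,n,o,p] =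
      a*(f*(k*p-l*o) - g*(j*p-l*n) + h*(j*o-k*n))
    - b*(e*(k*p-l*o) - g*(i*p-l*m) + h*(i*o-k*m))
    + c*(e*(j*p-l*n) - f*(i*p-l*m) + h*(i*n-j*m))
    - d*(e*(j*o-k*n) - f*(i*o-k*m) + g*(i*n-j*m)) := by
  simp [Matrix.det_succ_row_zero, Fin.sum_univ_succ, Fin.succAbove,
    show (Fin.castSucc 2 : Fin 4) = 2 from rfl, Matrix.cons_val_two, Matrix.tail_cons]
  ring

/-- The value `V_α` for the case `(a, γ, α, b) = (1, 2, 4, 3)` of the pentagon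
construction equals `(1/4)(5√5 − √(10(√5 + 5)) + 5) > 0`. -/
theorem pentagon_Valpha_first_case
    (θ x y : ℕ → ℝ)
    (hθ : ∀ n, θ n = 2 * Real.pi * ((n : ℝ) / 5 + 1 / 20))
    (hx : ∀ n, x n = Real.sin (θ n))
    (hy : ∀ n, y n = Real.cos (θ n)) :
    Matrix.det !![x 1, y 1, x 1 + y 1 - 1, 1;
                  x 2, y 2, -x 2 + y 2 + 1, 1;
                  x 4, y 4, x 4 - y 4 + 1, 1;
                  x 3, y 3, -x 3 - y 3 - 1, 1]
      = 1 / 4 * (5 * Real.sqrt 5 - Real.sqrt (10 * (Real.sqrt 5 + 5)) + 5) ∧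
    0 < 1 / 4 * (5 * Real.sqrt 5 - Real.sqrt (10 * (Real.sqrt 5 + 5)) + 5) := by
  set c := Real.cos (π / 5) with hcdef
  set s := Real.sin (π / 5) with hsdef
  have hc : c = (1 + Real.sqrt 5) / 4 := Real.cos_pi_div_five
  have hs2 : s ^ 2 = 1 - c ^ 2 := by
    have := Real.sin_sq_add_cos_sq (π / 5); nlinarith [this]
  have hs2' : s ^ 2 = 1 - ((1 + Real.sqrt 5) / 4) ^ 2 := by rw [hs2, hc]
  have hspos : 0 < s := Real.sin_pos_of_pos_of_lt_pi (by positivity)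
    (by nlinarith [Real.pi_pos])
  have h5 : Real.sqrt 5 ^ 2 = 5 := Real.sq_sqrt (by norm_num)
  have h5pos : (0:ℝ) < Real.sqrt 5 := Real.sqrt_pos.mpr (by norm_num)
  have h5lb : (11:ℝ)/5 < Real.sqrt 5 := by nlinarith [h5, h5pos]
  have hslt : s < 3 / 5 := by nlinarith [hs2', h5, h5lb, hspos]
  -- angle computations
  have hθ1 : θ 1 = π / 2 := by rw [hθ]; push_cast; ring
  have hθ2 : θ 2 = π - (π / 2 - 2 * (π / 5)) := by rw [hθ]; push_cast; ring
  have hθ3 : θ 3 = (π / 2 - π / 5) + π := by rw [hθ]; push_cast; ring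
  have hθ4 : θ 4 = 2 * π - (π / 2 - π / 5) := by rw [hθ]; push_cast; ring
  have hx1 : x 1 = 1 := by rw [hx, hθ1, Real.sin_pi_div_two]
  have hy1 : y 1 = 0 := by rw [hy, hθ1, Real.cos_pi_div_two]
  have hx2 : x 2 = 2 * c ^ 2 - 1 := by
    rw [hx, hθ2, Real.sin_pi_sub, Real.sin_pi_div_two_sub, Real.cos_two_mul, hcdef]
  have hy2 : y 2 = -(2 * s * c) := by
    rw [hy, hθ2, Real.cos_pi_sub, Real.cos_pi_div_two_sub, Real.sin_two_mul, hsdef, hcdef]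
  have hx3 : x 3 = -c := by
    rw [hx, hθ3, Real.sin_add_pi, Real.sin_pi_div_two_sub, hcdef]
  have hy3 : y 3 = -s := by
    rw [hy, hθ3, Real.cos_add_pi, Real.cos_pi_div_two_sub, hsdef]
  have hx4 : x 4 = -c := by
    rw [hx, hθ4, Real.sin_two_pi_sub, Real.sin_pi_div_two_sub, hcdef]
  have hy4 : y 4 = s := by
    rw [hy, hθ4, Real.cos_two_pi_sub, Real.cos_pi_div_two_sub, hsdef]
  -- the square root identity
  have hsq : Real.sqrt (10 * (Real.sqrt 5 + 5)) = (2 * Real.sqrt 5 + 10) * s := by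
    have hnn : 0 ≤ (2 * Real.sqrt 5 + 10) * s := by positivity
    have h : 10 * (Real.sqrt 5 + 5) = ((2 * Real.sqrt 5 + 10) * s) ^ 2 := by
      rw [mul_pow, hs2']; nlinarith [h5]
    rw [h, Real.sqrt_sq hnn]
  constructor
  · rw [hsq, det4_formula, hx1, hy1, hx2, hy2, hx3, hy3, hx4, hy4, hc]
    linear_combination (5/2 + 3*Real.sqrt 5 + Real.sqrt 5^2/2) * hs2' +
      (5/8*s + s*Real.sqrt 5/8 - 7/32 - Real.sqrt 5/4 - Real.sqrt 5^2/32) * h5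
  · rw [hsq]
    nlinarith [h5, hspos, hslt, h5pos]
end

section
/- Let θ_n = 2π(n/5 + 1/20) for n ∈ {0,1,2,3,4}, and set x_n = −cos θ_n, y_n = sin θ_n. Then the determinant of the 4×4 matrix with rows (x_2, y_2, x_2 + y_2 − 1, 1), (x_3, y_3, −x_3 + y_3 + 1, 1), (x_0, y_0, x_0 − y_0 + 1, 1), (x_4, y_4, −x_4 − y_4 − 1, 1) equals 5 − √((5/2)(5 − √5)), which is strictly positive. -/
theorem det_fin_four_aux (a b c d e f g h i j k l m n o p : ℝ) :
    Matrix.det !![a,b,c,d; e,f,g,h; i,j,k,l; m,n,o,p] =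
      a*(f*(k*p-l*o)-g*(j*p-l*n)+h*(j*o-k*n))
      - b*(e*(k*p-l*o)-g*(i*p-l*m)+h*(i*o-k*m))
      + c*(e*(j*p-l*n)-f*(i*p-l*m)+h*(i*n-j*m))
      - d*(e*(j*o-k*n)-f*(i*o-k*m)+g*(i*n-j*m)) := by
  rw [Matrix.det_succ_row_zero]
  have hcs : (Fin.castSucc (2 : Fin 3) : Fin 4) = 2 := rfl
  simp (config := { decide := true }) [hcs, Matrix.cons_val_two, Matrix.tail_cons,
    Fin.sum_univ_succ, Matrix.det_fin_three, Matrix.submatrix_apply, Fin.succAbove]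
  ring

/-- The value `V_α` for the case `(a, γ, α, b) = (2, 3, 0, 4)` of the pentagon
construction (with the X and Z measurements swapped and the Z outcome flipped, i.e.
coordinates `(−cos θ, sin θ)`) equals `5 − √((5/2)(5 − √5)) > 0`. -/
theorem pentagon_Valpha_second_case
    (θ x y : ℕ → ℝ)
    (hθ : ∀ n, θ n = 2 * Real.pi * ((n : ℝ) / 5 + 1 / 20))
    (hx : ∀ n, x n = -Real.cos (θ n))
    (hy : ∀ n, y n = Real.sin (θ n)) :
    Matrix.det !![x 2, y 2, x 2 + y 2 - 1, 1;
                  x 3, y 3, -x 3 + y 3 + 1, 1;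
                  x 0, y 0, x 0 - y 0 + 1, 1;
                  x 4, y 4, -x 4 - y 4 - 1, 1]
      = 5 - Real.sqrt (5 / 2 * (5 - Real.sqrt 5)) ∧
    0 < 5 - Real.sqrt (5 / 2 * (5 - Real.sqrt 5)) := by
  have hpi := Real.pi_pos
  have h5 : Real.sqrt 5 ^ 2 = 5 := Real.sq_sqrt (by norm_num)
  have h5n : (0:ℝ) ≤ Real.sqrt 5 := Real.sqrt_nonneg 5
  -- positivity of the target value
  have hpos : 0 < 5 - Real.sqrt (5 / 2 * (5 - Real.sqrt 5)) := by
    have : Real.sqrt (5 / 2 * (5 - Real.sqrt 5)) < 5 := by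
      rw [Real.sqrt_lt' (by norm_num : (0:ℝ) < 5)]
      nlinarith [h5n]
    linarith
  refine ⟨?_, hpos⟩
  -- abbreviations
  have hcos5 : Real.cos (Real.pi / 5) = (1 + Real.sqrt 5) / 4 := Real.cos_pi_div_five
  have hcos25 : Real.cos (2 * Real.pi / 5) = (Real.sqrt 5 - 1) / 4 := by
    have h := Real.cos_two_mul (Real.pi / 5)
    rw [show 2 * Real.pi / 5 = 2 * (Real.pi / 5) by ring, h, hcos5]
    nlinarith [h5]
  -- values of sin at π/10 and 3π/10
  have hs1v : Real.sin (Real.pi / 10) = (Real.sqrt 5 - 1) / 4 := by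
    rw [show Real.pi / 10 = Real.pi / 2 - 2 * Real.pi / 5 by ring,
      Real.sin_pi_div_two_sub, hcos25]
  have hs3v : Real.sin (3 * Real.pi / 10) = (1 + Real.sqrt 5) / 4 := by
    rw [show 3 * Real.pi / 10 = Real.pi / 2 - Real.pi / 5 by ring,
      Real.sin_pi_div_two_sub, hcos5]
  -- product relations
  have hprod : Real.cos (3 * Real.pi / 10) * Real.cos (Real.pi / 10)
      + Real.sin (3 * Real.pi / 10) * Real.sin (Real.pi / 10) = (1 + Real.sqrt 5) / 4 := by
    have h := Real.cos_sub (3 * Real.pi / 10) (Real.pi / 10)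
    rw [show 3 * Real.pi / 10 - Real.pi / 10 = Real.pi / 5 by ring, hcos5] at h
    linarith
  have hprod2 : Real.cos (3 * Real.pi / 10) * Real.cos (Real.pi / 10)
      - Real.sin (3 * Real.pi / 10) * Real.sin (Real.pi / 10) = (Real.sqrt 5 - 1) / 4 := by
    have h := Real.cos_add (3 * Real.pi / 10) (Real.pi / 10)
    rw [show 3 * Real.pi / 10 + Real.pi / 10 = 2 * Real.pi / 5 by ring, hcos25] at h
    linarith
  have hcc : Real.cos (3 * Real.pi / 10) * Real.cos (Real.pi / 10) = Real.sqrt 5 / 4 := by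
    linarith
  have hsin : Real.sin (3 * Real.pi / 10) * Real.cos (Real.pi / 10)
      + Real.cos (3 * Real.pi / 10) * Real.sin (Real.pi / 10) = Real.cos (Real.pi / 10) := by
    have h := Real.sin_add (3 * Real.pi / 10) (Real.pi / 10)
    rw [show 3 * Real.pi / 10 + Real.pi / 10 = Real.pi / 2 - Real.pi / 10 by ring,
      Real.sin_pi_div_two_sub] at h
    linarith
  -- square of cos(3π/10)
  have hc3nn : 0 ≤ Real.cos (3 * Real.pi / 10) :=
    Real.cos_nonneg_of_mem_Icc ⟨by linarith, by linarith⟩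
  have hc3sq : Real.cos (3 * Real.pi / 10) ^ 2 = (10 - 2 * Real.sqrt 5) / 16 := by
    have h := Real.sin_sq_add_cos_sq (Real.pi / 5)
    have h2 : Real.cos (3 * Real.pi / 10) = Real.sin (Real.pi / 5) := by
      rw [show 3 * Real.pi / 10 = Real.pi / 2 - Real.pi / 5 by ring,
        Real.cos_pi_div_two_sub]
    rw [h2, hcos5] at *
    nlinarith [h5]
  -- the square root identity
  have hS : Real.sqrt (5 / 2 * (5 - Real.sqrt 5))
      = 2 * Real.sqrt 5 * Real.cos (3 * Real.pi / 10) := by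
    rw [show 5 / 2 * (5 - Real.sqrt 5) = (2 * Real.sqrt 5 * Real.cos (3 * Real.pi / 10)) ^ 2 by
        linear_combination (-4 * Real.sqrt 5 ^ 2) * hc3sq + ((Real.sqrt 5 - 5) / 2) * h5]
    exact Real.sqrt_sq (by positivity)
  -- rewrite the matrix entries
  have hx2 : x 2 = Real.cos (Real.pi / 10) := by
    rw [hx, hθ]; push_cast
    rw [show 2 * Real.pi * ((2:ℝ) / 5 + 1 / 20) = Real.pi - Real.pi / 10 by ring,
      Real.cos_pi_sub]; ring
  have hy2 : y 2 = Real.sin (Real.pi / 10) := by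
    rw [hy, hθ]; push_cast
    rw [show 2 * Real.pi * ((2:ℝ) / 5 + 1 / 20) = Real.pi - Real.pi / 10 by ring,
      Real.sin_pi_sub]
  have hx0 : x 0 = -Real.cos (Real.pi / 10) := by
    rw [hx, hθ]; push_cast
    rw [show 2 * Real.pi * ((0:ℝ) / 5 + 1 / 20) = Real.pi / 10 by ring]
  have hy0 : y 0 = Real.sin (Real.pi / 10) := by
    rw [hy, hθ]; push_cast
    rw [show 2 * Real.pi * ((0:ℝ) / 5 + 1 / 20) = Real.pi / 10 by ring]
  have hx3 : x 3 = Real.cos (3 * Real.pi / 10) := by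
    rw [hx, hθ]; push_cast
    rw [show 2 * Real.pi * ((3:ℝ) / 5 + 1 / 20)
        = 2 * Real.pi - (Real.pi - 3 * Real.pi / 10) by ring,
      Real.cos_two_pi_sub, Real.cos_pi_sub]; ring
  have hy3 : y 3 = -Real.sin (3 * Real.pi / 10) := by
    rw [hy, hθ]; push_cast
    rw [show 2 * Real.pi * ((3:ℝ) / 5 + 1 / 20)
        = 2 * Real.pi - (Real.pi - 3 * Real.pi / 10) by ring,
      Real.sin_two_pi_sub, Real.sin_pi_sub]
  have hx4 : x 4 = -Real.cos (3 * Real.pi / 10) := by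
    rw [hx, hθ]; push_cast
    rw [show 2 * Real.pi * ((4:ℝ) / 5 + 1 / 20)
        = 2 * Real.pi - 3 * Real.pi / 10 by ring,
      Real.cos_two_pi_sub]
  have hy4 : y 4 = -Real.sin (3 * Real.pi / 10) := by
    rw [hy, hθ]; push_cast
    rw [show 2 * Real.pi * ((4:ℝ) / 5 + 1 / 20)
        = 2 * Real.pi - 3 * Real.pi / 10 by ring,
      Real.sin_two_pi_sub]
  rw [hs1v, hs3v] at hsin
  rw [hx2, hy2, hx3, hy3, hx0, hy0, hx4, hy4, hS, hs1v, hs3v, det_fin_four_aux]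
  linear_combination (4 * Real.sqrt 5) * hcc + (2 * Real.sqrt 5) * hsin + h5
end

section
/- Let θ_n = 2π(n/5 + 1/20) for n ∈ {0,1,2,3,4}, and set x_n = sin(θ_n + 3π/10), y_n = cos θ_n. Then the determinant of the 4×4 matrix with rows (x_0, y_0, x_0 + y_0 − 1, 1), (x_1, y_1, −x_1 + y_1 + 1, 1), (x_3, y_3, x_3 − y_3 + 1, 1), (x_2, y_2, −x_2 − y_2 − 1, 1) equals (5/8)(3√(10 − 2√5) − 2√5 − 2), which is strictly positive. -/
/-- The value `V_α` for the most difficult case `(a, γ, α, b) = (0, 1, 3, 2)` of the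
pentagon construction, using the measurement at angle `3π/10` in place of Pauli X, equals
`(5/8)(3√(10 − 2√5) − 2√5 − 2) > 0`. -/
theorem pentagon_Valpha_difficult_case
    (θ x y : ℕ → ℝ)
    (hθ : ∀ n, θ n = 2 * Real.pi * ((n : ℝ) / 5 + 1 / 20))
    (hx : ∀ n, x n = Real.sin (θ n + 3 * Real.pi / 10))
    (hy : ∀ n, y n = Real.cos (θ n)) :
    Matrix.det !![x 0, y 0, x 0 + y 0 - 1, 1;
                  x 1, y 1, -x 1 + y 1 + 1, 1;
                  x 3, y 3, x 3 - y 3 + 1, 1;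
                  x 2, y 2, -x 2 - y 2 - 1, 1]
      = 5 / 8 * (3 * Real.sqrt (10 - 2 * Real.sqrt 5) - 2 * Real.sqrt 5 - 2) ∧
    0 < 5 / 8 * (3 * Real.sqrt (10 - 2 * Real.sqrt 5) - 2 * Real.sqrt 5 - 2) := by
  have hpi : (0:ℝ) < Real.pi := Real.pi_pos
  set s : ℝ := Real.sin (Real.pi / 5) with hsdef
  set c : ℝ := Real.cos (Real.pi / 5) with hcdef
  have hcv : c = (1 + Real.sqrt 5) / 4 := Real.cos_pi_div_five
  have h5 : Real.sqrt 5 ^ 2 = 5 := Real.sq_sqrt (by norm_num)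
  have hsqrt5 : Real.sqrt 5 = 4 * c - 1 := by rw [hcv]; ring
  have hcq : 4 * c ^ 2 = 2 * c + 1 := by
    rw [hcv]; nlinarith [h5]
  have hsq : s ^ 2 = 1 - c ^ 2 := by
    have := Real.sin_sq_add_cos_sq (Real.pi / 5)
    rw [← hsdef, ← hcdef] at this; nlinarith
  have hspos : 0 < s := by
    apply Real.sin_pos_of_pos_of_lt_pi (by positivity)
    linarith [div_lt_self hpi (by norm_num : (1:ℝ) < 5)]
  have h10 : Real.sqrt (10 - 2 * Real.sqrt 5) = 4 * s := by
    rw [show (10 : ℝ) - 2 * Real.sqrt 5 = (4 * s) ^ 2 by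
      rw [hsqrt5]; nlinarith [hcq, hsq]]
    exact Real.sqrt_sq (by positivity)
  -- values of the entries
  have hx0 : x 0 = 2 * s * c := by
    rw [hx, show θ 0 + 3 * Real.pi / 10 = 2 * (Real.pi / 5) by rw [hθ]; push_cast; ring,
      Real.sin_two_mul]
  have hy0 : y 0 = 2 * s * c := by
    rw [hy, show θ 0 = Real.pi / 2 - 2 * (Real.pi / 5) by rw [hθ]; push_cast; ring,
      Real.cos_pi_div_two_sub, Real.sin_two_mul]
  have hx1 : x 1 = s := by
    rw [hx, show θ 1 + 3 * Real.pi / 10 = Real.pi - Real.pi / 5 by rw [hθ]; push_cast; ring,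
      Real.sin_pi_sub]
  have hy1 : y 1 = 0 := by
    rw [hy, show θ 1 = Real.pi / 2 by rw [hθ]; push_cast; ring, Real.cos_pi_div_two]
  have hx2 : x 2 = -s := by
    rw [hx, show θ 2 + 3 * Real.pi / 10 = Real.pi / 5 + Real.pi by rw [hθ]; push_cast; ring,
      Real.sin_add_pi]
  have hy2 : y 2 = -(2 * s * c) := by
    rw [hy, show θ 2 = Real.pi - (Real.pi / 2 - 2 * (Real.pi / 5)) by rw [hθ]; push_cast; ring,
      Real.cos_pi_sub, Real.cos_pi_div_two_sub, Real.sin_two_mul]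
  have hx3 : x 3 = -(2 * s * c) := by
    rw [hx, show θ 3 + 3 * Real.pi / 10 = 2 * Real.pi - 2 * (Real.pi / 5) by
        rw [hθ]; push_cast; ring,
      Real.sin_two_pi_sub, Real.sin_two_mul]
  have hy3 : y 3 = -s := by
    rw [hy, show θ 3 = (Real.pi / 2 - Real.pi / 5) + Real.pi by rw [hθ]; push_cast; ring,
      Real.cos_add_pi, Real.cos_pi_div_two_sub]
  have hRHS : 5 / 8 * (3 * Real.sqrt (10 - 2 * Real.sqrt 5) - 2 * Real.sqrt 5 - 2)
      = 15 / 2 * s - 5 * c := by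
    rw [h10, hsqrt5]; ring
  constructor
  · rw [hRHS]
    have h1 : (Fin.succAbove 2 2 : Fin 4) = 3 := rfl
    have h2 : (Fin.succAbove 1 2 : Fin 4) = 3 := rfl
    have h3 : (Fin.castSucc 2 : Fin 4) = 2 := rfl
    have h4 : (Fin.succAbove 3 2 : Fin 4) = 2 := rfl
    simp [Matrix.det_succ_row_zero, Fin.sum_univ_succ, h1, h2, h3, h4,
      hx0, hy0, hx1, hy1, hx2, hy2, hx3, hy3]
    linear_combination
      (16*s*c^3 + 40*s*c^2 - 16*s*c - 16*c^2 - 4*c + 2) * (hsq)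
      + (-4*s*c^3 - 12*s*c^2 + s*c + 15/2*s + 4*c^2 + 3*c - 2) * (hcq)
  · rw [hRHS]
    have hcpos : 0 < c := by rw [hcv]; positivity
    nlinarith [hsq, hcq, hspos, hcpos, sq_nonneg (3 * s - 2 * c)]
end

section
/- Let θ_n = 2π(n/5 + 1/20) for n ∈ {0,1,2,3,4}, and set x_n = sin(θ_n + 3π/10), y_n = cos θ_n. Then the determinant of the 4×4 matrix with rows (x_0, y_0, x_0 + y_0 − 1, 1), (x_1, y_1, −x_1 + y_1 + 1, 1), (x_4, y_4, x_4 − y_4 + 1, 1), (x_2, y_2, −x_2 − y_2 − 1, 1) equals (5/4)(√(2(√5 + 5)) − √5 − 1), which is strictly positive. -/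
lemma my_det_fin_four (A : Matrix (Fin 4) (Fin 4) ℝ) :
    A.det =
      A 0 0 * A 1 1 * A 2 2 * A 3 3 - A 0 0 * A 1 1 * A 2 3 * A 3 2
      - A 0 0 * A 1 2 * A 2 1 * A 3 3 + A 0 0 * A 1 2 * A 2 3 * A 3 1
      + A 0 0 * A 1 3 * A 2 1 * A 3 2 - A 0 0 * A 1 3 * A 2 2 * A 3 1
      - A 0 1 * A 1 0 * A 2 2 * A 3 3 + A 0 1 * A 1 0 * A 2 3 * A 3 2
      + A 0 1 * A 1 2 * A 2 0 * A 3 3 - A 0 1 * A 1 2 * A 2 3 * A 3 0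
      - A 0 1 * A 1 3 * A 2 0 * A 3 2 + A 0 1 * A 1 3 * A 2 2 * A 3 0
      + A 0 2 * A 1 0 * A 2 1 * A 3 3 - A 0 2 * A 1 0 * A 2 3 * A 3 1
      - A 0 2 * A 1 1 * A 2 0 * A 3 3 + A 0 2 * A 1 1 * A 2 3 * A 3 0
      + A 0 2 * A 1 3 * A 2 0 * A 3 1 - A 0 2 * A 1 3 * A 2 1 * A 3 0
      - A 0 3 * A 1 0 * A 2 1 * A 3 2 + A 0 3 * A 1 0 * A 2 2 * A 3 1
      + A 0 3 * A 1 1 * A 2 0 * A 3 2 - A 0 3 * A 1 1 * A 2 2 * A 3 0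
      - A 0 3 * A 1 2 * A 2 0 * A 3 1 + A 0 3 * A 1 2 * A 2 1 * A 3 0 := by
  rw [Matrix.det_succ_row_zero]
  simp [Fin.sum_univ_succ, Matrix.det_fin_three, Matrix.submatrix_apply, Fin.succAbove,
    show ((2:Fin 3).succ : Fin 4) = 3 from rfl, show ((2:Fin 3).castSucc : Fin 4) = 2 from rfl]
  ring

/-- The value `V_β` for the most difficult case `(a, γ, β, b) = (0, 1, 4, 2)` of the
pentagon construction, using the measurement at angle `3π/10` in place of Pauli X, equals
`(5/4)(√(2(√5 + 5)) − √5 − 1) > 0`. -/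
theorem pentagon_Vbeta_difficult_case
    (θ x y : ℕ → ℝ)
    (hθ : ∀ n, θ n = 2 * Real.pi * ((n : ℝ) / 5 + 1 / 20))
    (hx : ∀ n, x n = Real.sin (θ n + 3 * Real.pi / 10))
    (hy : ∀ n, y n = Real.cos (θ n)) :
    Matrix.det !![x 0, y 0, x 0 + y 0 - 1, 1;
                  x 1, y 1, -x 1 + y 1 + 1, 1;
                  x 4, y 4, x 4 - y 4 + 1, 1;
                  x 2, y 2, -x 2 - y 2 - 1, 1]
      = 5 / 4 * (Real.sqrt (2 * (Real.sqrt 5 + 5)) - Real.sqrt 5 - 1) ∧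
    0 < 5 / 4 * (Real.sqrt (2 * (Real.sqrt 5 + 5)) - Real.sqrt 5 - 1) := by
  set r : ℝ := Real.sqrt 5 with hrdef
  set c : ℝ := Real.cos (Real.pi / 10) with hcdef
  set d : ℝ := Real.sin (Real.pi / 5) with hddef
  have pi_pos := Real.pi_pos
  have hr : r ^ 2 = 5 := Real.sq_sqrt (by norm_num)
  have hc5 : Real.cos (Real.pi / 5) = (1 + r) / 4 := Real.cos_pi_div_five
  have hc2 : c ^ 2 = (r + 5) / 8 := by
    have h := Real.cos_two_mul (Real.pi / 10)
    rw [show 2 * (Real.pi / 10) = Real.pi / 5 by ring, hc5] at h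
    rw [hcdef]; nlinarith [h]
  have hs : Real.sin (Real.pi / 10) = (r - 1) / 4 := by
    have h1 : Real.sin (Real.pi / 10) = Real.cos (2 * (Real.pi / 5)) := by
      rw [← Real.cos_pi_div_two_sub]; ring_nf
    have h2 := Real.cos_two_mul (Real.pi / 5)
    rw [h1, h2, hc5]; nlinarith [hr]
  have hd : d = (r - 1) / 2 * c := by
    have h := Real.sin_two_mul (Real.pi / 10)
    rw [show 2 * (Real.pi / 10) = Real.pi / 5 by ring, hs] at h
    rw [hddef, h]; ring
  have hcpos : 0 < c := by
    rw [hcdef]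
    apply Real.cos_pos_of_mem_Ioo
    rw [Set.mem_Ioo]
    constructor <;> linarith
  have hsq : Real.sqrt (2 * (r + 5)) = 4 * c := by
    rw [show 2 * (r + 5) = (4 * c) ^ 2 by linear_combination (-16) * hc2]
    exact Real.sqrt_sq (by positivity)
  have hx0 : x 0 = c := by
    rw [hx, hθ, show 2 * Real.pi * (((0 : ℕ) : ℝ) / 5 + 1 / 20) + 3 * Real.pi / 10
        = Real.pi / 2 - Real.pi / 10 by push_cast; ring, Real.sin_pi_div_two_sub, hcdef]
  have hx1 : x 1 = d := by
    rw [hx, hθ, show 2 * Real.pi * (((1 : ℕ) : ℝ) / 5 + 1 / 20) + 3 * Real.pi / 10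
        = Real.pi - Real.pi / 5 by push_cast; ring, Real.sin_pi_sub, hddef]
  have hx4 : x 4 = 0 := by
    rw [hx, hθ, show 2 * Real.pi * (((4 : ℕ) : ℝ) / 5 + 1 / 20) + 3 * Real.pi / 10
        = 2 * Real.pi by push_cast; ring, Real.sin_two_pi]
  have hx2 : x 2 = -d := by
    rw [hx, hθ, show 2 * Real.pi * (((2 : ℕ) : ℝ) / 5 + 1 / 20) + 3 * Real.pi / 10
        = Real.pi - -(Real.pi / 5) by push_cast; ring, Real.sin_pi_sub, Real.sin_neg, hddef]
  have hy0 : y 0 = c := by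
    rw [hy, hθ, show 2 * Real.pi * (((0 : ℕ) : ℝ) / 5 + 1 / 20)
        = Real.pi / 10 by push_cast; ring, hcdef]
  have hy1 : y 1 = 0 := by
    rw [hy, hθ, show 2 * Real.pi * (((1 : ℕ) : ℝ) / 5 + 1 / 20)
        = Real.pi / 2 by push_cast; ring, Real.cos_pi_div_two]
  have hy4 : y 4 = d := by
    rw [hy, hθ, show 2 * Real.pi * (((4 : ℕ) : ℝ) / 5 + 1 / 20)
        = 2 * Real.pi - (Real.pi / 2 - Real.pi / 5) by push_cast; ring,
      Real.cos_two_pi_sub, Real.cos_pi_div_two_sub, hddef]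
  have hy2 : y 2 = -c := by
    rw [hy, hθ, show 2 * Real.pi * (((2 : ℕ) : ℝ) / 5 + 1 / 20)
        = Real.pi - Real.pi / 10 by push_cast; ring, Real.cos_pi_sub, hcdef]
  -- positivity of target
  have hlt : (1 + r) / 4 < c := by
    rw [hcdef, ← hc5]
    exact Real.cos_lt_cos_of_nonneg_of_le_pi (by positivity) (by linarith) (by linarith)
  constructor
  · rw [hx0, hx1, hx2, hx4, hy0, hy1, hy2, hy4, hsq]
    rw [my_det_fin_four]
    norm_num [Matrix.cons_val_zero, Matrix.cons_val_one, Matrix.head_cons, Matrix.cons_val_succ, Matrix.vecHead, Matrix.vecTail, Function.comp, Matrix.cons_val_two, Matrix.cons_val_three, Matrix.tail_cons]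
    linear_combination (8*c*d - 2*d - 5*c + 4*c^2*r - c*r) * hd
      + (2*c*r^2 - 2*c*r - 2*r + 5/2 - r^2/2) * hc2 + (c*r/4 - r/16 + c - 9/16) * hr
  · rw [hsq]; linarith
end
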